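/- Let G be a group acting transitively on a set X and x₀ ∈ X. If the action of G on the set P_f(X) of finite subsets of X (by pushing sets forward) admits an invariant mean giving weight 1/2 to the collection of finite sets containing x₀, then it admits an invariant mean giving full weight (weight 1) to the collection of finite sets containing x₀. -/

import Mathlib

open Pointwise

/-- A finitely additive invariant probability mean on a `G`-set `Y`. -/
structure InvariantMean (G : Type*) [Group G] (Y : Type*) [MulAction G Y] where
  m : Set Y → ℝ
  nonneg : ∀ A : Set Y, 0 ≤ m A
  total : m Set.univ = 1
  add_disjoint : ∀ A B : Set Y, Disjoint A B → m (A ∪ B) = m A + m B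
  invariant : ∀ (g : G) (A : Set Y), m ((g • ·) '' A) = m A

namespace IMaux

attribute [local instance] Classical.propDecidable

variable {G : Type*} [Group G] {Y : Type*} [MulAction G Y]

lemma m_empty (M : InvariantMean G Y) : M.m ∅ = 0 := by
  have h := M.add_disjoint ∅ ∅ (by simp)
  simp at h; linarith

lemma m_mono (M : InvariantMean G Y) {A B : Set Y} (h : A ⊆ B) : M.m A ≤ M.m B := by
  have h2 := M.add_disjoint A (B \ A) Set.disjoint_sdiff_right
  rw [Set.union_diff_cancel h] at h2
  have := M.nonneg (B \ A); linarith

lemma m_le_one (M : InvariantMean G Y) (A : Set Y) : M.m A ≤ 1 := by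
  have := m_mono M (Set.subset_univ A); rw [M.total] at this; exact this

lemma m_mem_Icc (M : InvariantMean G Y) (A : Set Y) : M.m A ∈ Set.Icc (0:ℝ) 1 :=
  ⟨M.nonneg A, m_le_one M A⟩

lemma m_compl (M : InvariantMean G Y) (A : Set Y) : M.m Aᶜ = 1 - M.m A := by
  have h := M.add_disjoint A Aᶜ disjoint_compl_right
  rw [Set.union_compl_self, M.total] at h; linarith

lemma m_finadd (M : InvariantMean G Y) {κ : Type*} (S : Finset κ) (D : κ → Set Y)
    (hd : ∀ i ∈ S, ∀ j ∈ S, i ≠ j → Disjoint (D i) (D j)) :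
    M.m (⋃ i ∈ S, D i) = ∑ i ∈ S, M.m (D i) := by
  classical
  induction S using Finset.induction_on with
  | empty => simpa using m_empty M
  | @insert x S hx ih =>
    rw [Finset.sum_insert hx, ← ih (fun i hi j hj hij =>
      hd i (Finset.mem_insert_of_mem hi) j (Finset.mem_insert_of_mem hj) hij)]
    have hdisj : Disjoint (D x) (⋃ i ∈ S, D i) := by
      rw [Set.disjoint_iUnion₂_right]
      intro i hi
      exact hd x (Finset.mem_insert_self x S) i (Finset.mem_insert_of_mem hi)
        (fun h => hx (h ▸ hi))
    rw [← M.add_disjoint _ _ hdisj]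
    congr 1
    simp [Set.iUnion_iUnion_eq_or_left]

/-- Key comparison: integrals of simple functions only depend on the pointwise values. -/
lemma key (M : InvariantMean G Y) {ι : Type*} [Fintype ι] (C : ι → Set Y) (a b : ι → ℝ)
    (hle : ∀ y, ∑ i, (if y ∈ C i then a i else 0) ≤ ∑ i, (if y ∈ C i then b i else 0)) :
    ∑ i, a i * M.m (C i) ≤ ∑ i, b i * M.m (C i) := by
  classical
  set cell : (ι → Bool) → Set Y := fun p => {y | ∀ i, y ∈ C i ↔ p i = true} with hcell
  have hdisj : ∀ p q : ι → Bool, p ≠ q → Disjoint (cell p) (cell q) := by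
    intro p q hpq
    rw [Set.disjoint_left]
    intro y hyp hyq
    exact hpq (funext fun i => by
      have h1 := (hyp i); have h2 := (hyq i)
      rw [← Bool.coe_iff_coe]; rw [← h1, ← h2])
  have hC : ∀ i, C i = ⋃ p ∈ Finset.univ.filter (fun p : ι → Bool => p i = true), cell p := by
    intro i
    ext y
    simp only [Set.mem_iUnion, Finset.mem_filter, Finset.mem_univ, true_and]
    constructor
    · intro hy
      refine ⟨fun j => decide (y ∈ C j), by simp [hy], fun j => by simp⟩
    · rintro ⟨p, hpi, hyp⟩
      exact (hyp i).mpr hpi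
  have hm : ∀ i, M.m (C i) = ∑ p ∈ Finset.univ.filter (fun p : ι → Bool => p i = true),
      M.m (cell p) := by
    intro i
    rw [hC i, m_finadd M]
    intro p _ q _ hpq; exact hdisj p q hpq
  have main : ∀ c : ι → ℝ, ∑ i, c i * M.m (C i)
      = ∑ p : ι → Bool, (∑ i, if p i = true then c i else 0) * M.m (cell p) := by
    intro c
    simp only [hm, Finset.sum_filter, Finset.mul_sum]
    rw [Finset.sum_comm]
    refine Finset.sum_congr rfl fun p _ => ?_
    rw [Finset.sum_mul]
    refine Finset.sum_congr rfl fun i _ => ?_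
    by_cases h : p i = true <;> simp [h]
  rw [main a, main b]
  apply Finset.sum_le_sum
  intro p _
  by_cases hp : (cell p).Nonempty
  · obtain ⟨y, hy⟩ := hp
    have hy' : ∀ i, y ∈ C i ↔ p i = true := hy
    have hcoeff : ∀ c : ι → ℝ, (∑ i, if p i = true then c i else 0)
        = ∑ i, if y ∈ C i then c i else 0 := fun c =>
      Finset.sum_congr rfl fun i _ => (if_congr (hy' i) rfl rfl).symm
    rw [hcoeff a, hcoeff b]
    exact mul_le_mul_of_nonneg_right (hle y) (M.nonneg _)
  · have he : cell p = ∅ := Set.not_nonempty_iff_eq_empty.mp hp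
    rw [he, m_empty M]
    simp

lemma key2 (M : InvariantMean G Y) {ι κ : Type*} [Fintype ι] [Fintype κ]
    (C : ι → Set Y) (a : ι → ℝ) (D : κ → Set Y) (b : κ → ℝ)
    (hle : ∀ y, ∑ i, (if y ∈ C i then a i else 0) ≤ ∑ j, (if y ∈ D j then b j else 0)) :
    ∑ i, a i * M.m (C i) ≤ ∑ j, b j * M.m (D j) := by
  have h := key M (Sum.elim C D) (Sum.elim a 0) (Sum.elim 0 b) (fun y => by
    rw [Fintype.sum_sum_type, Fintype.sum_sum_type]
    have e1 : ∑ j : κ, (if y ∈ Sum.elim C D (Sum.inr j) then (Sum.elim a 0 : ι ⊕ κ → ℝ)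
        (Sum.inr j) else 0) = 0 :=
      Finset.sum_eq_zero fun j _ => by split_ifs <;> rfl
    have e2 : ∑ i : ι, (if y ∈ Sum.elim C D (Sum.inl i) then (Sum.elim 0 b : ι ⊕ κ → ℝ)
        (Sum.inl i) else 0) = 0 :=
      Finset.sum_eq_zero fun j _ => by split_ifs <;> rfl
    rw [e1, e2, add_zero, zero_add]; exact hle y)
  simpa [Fintype.sum_sum_type] using h

/-! ### Ultrafilter limits -/

noncomputable def UU : Ultrafilter ℕ := Ultrafilter.of Filter.atTop

lemma UU_le : (UU : Filter ℕ) ≤ Filter.atTop := Ultrafilter.of_le _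

lemma ev_pos : ∀ᶠ n in (UU : Filter ℕ), 0 < n :=
  (Filter.eventually_gt_atTop 0).filter_mono UU_le

lemma exists_ulim (u : ℕ → ℝ) (h : ∀ n, u n ∈ Set.Icc (0:ℝ) 1) :
    ∃ a ∈ Set.Icc (0:ℝ) 1, Filter.Tendsto u UU (nhds a) := by
  have hle : (↑(UU.map u) : Filter ℝ) ≤ Filter.principal (Set.Icc 0 1) := by
    rw [Filter.le_principal_iff, Ultrafilter.coe_map, Filter.mem_map]
    have : u ⁻¹' Set.Icc (0:ℝ) 1 = Set.univ := Set.eq_univ_of_forall h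
    rw [this]; exact Filter.univ_mem
  obtain ⟨a, ha, hta⟩ := (isCompact_Icc (a := (0:ℝ)) (b := 1)).ultrafilter_le_nhds
    (UU.map u) hle
  rw [Ultrafilter.coe_map] at hta
  exact ⟨a, ha, hta⟩

noncomputable def ulim (u : ℕ → ℝ) : ℝ :=
  if h : ∀ n, u n ∈ Set.Icc (0:ℝ) 1 then (exists_ulim u h).choose else 0

lemma ulim_mem {u : ℕ → ℝ} (h : ∀ n, u n ∈ Set.Icc (0:ℝ) 1) :
    ulim u ∈ Set.Icc (0:ℝ) 1 := by
  rw [ulim, dif_pos h]; exact (exists_ulim u h).choose_spec.1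

lemma ulim_spec {u : ℕ → ℝ} (h : ∀ n, u n ∈ Set.Icc (0:ℝ) 1) :
    Filter.Tendsto u UU (nhds (ulim u)) := by
  rw [ulim, dif_pos h]; exact (exists_ulim u h).choose_spec.2

lemma ulim_eq {u : ℕ → ℝ} (h : ∀ n, u n ∈ Set.Icc (0:ℝ) 1) {a : ℝ}
    (ha : Filter.Tendsto u UU (nhds a)) : ulim u = a :=
  tendsto_nhds_unique (ulim_spec h) ha

lemma ulim_le {u : ℕ → ℝ} (h : ∀ n, u n ∈ Set.Icc (0:ℝ) 1) {c : ℝ}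
    (hc : ∀ᶠ n in (UU : Filter ℕ), u n ≤ c) : ulim u ≤ c :=
  le_of_tendsto (ulim_spec h) hc

lemma le_ulim {u : ℕ → ℝ} (h : ∀ n, u n ∈ Set.Icc (0:ℝ) 1) {c : ℝ}
    (hc : ∀ᶠ n in (UU : Filter ℕ), c ≤ u n) : c ≤ ulim u :=
  ge_of_tendsto (ulim_spec h) hc

lemma tendsto_div_nat (c : ℝ) :
    Filter.Tendsto (fun n : ℕ => c / (n : ℝ)) UU (nhds 0) := by
  have h := (tendsto_one_div_atTop_nhds_zero_nat.const_mul c).mono_left UU_le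
  simpa [div_eq_mul_inv, one_div, mul_comm] using h

end IMaux
namespace IMaux

attribute [local instance] Classical.propDecidable

variable {G : Type*} [Group G] {Y : Type*} [MulAction G Y]

/-! ### Staircase approximations -/

lemma snsum_eq {n : ℕ} (hn : 0 < n) {t : ℝ} (ht : 0 ≤ t) :
    ∑ i ∈ Finset.range n, (if ((i:ℝ)+1)/(n:ℝ) ≤ t then (1/(n:ℝ)) else 0)
      = ((min n ⌊(n:ℝ) * t⌋₊ : ℕ) : ℝ) / n := by
  have hn' : (0:ℝ) < n := by exact_mod_cast hn
  have hnt : (0:ℝ) ≤ (n:ℝ) * t := by positivity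
  have hfilter : (Finset.range n).filter (fun i : ℕ => ((i:ℝ)+1)/(n:ℝ) ≤ t)
      = Finset.range (min n ⌊(n:ℝ) * t⌋₊) := by
    ext i
    simp only [Finset.mem_filter, Finset.mem_range, lt_min_iff]
    constructor
    · rintro ⟨h1, h2⟩
      refine ⟨h1, ?_⟩
      rw [div_le_iff₀ hn'] at h2
      have h3 : i + 1 ≤ ⌊(n:ℝ) * t⌋₊ := Nat.le_floor (by push_cast; nlinarith)
      omega
    · rintro ⟨h1, h2⟩
      refine ⟨h1, ?_⟩
      have h4 : ((i:ℝ)+1) ≤ (⌊(n:ℝ) * t⌋₊ : ℝ) := by exact_mod_cast h2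
      have h5 := Nat.floor_le hnt
      rw [div_le_iff₀ hn']
      nlinarith
  rw [← Finset.sum_filter, hfilter, Finset.sum_const, Finset.card_range, nsmul_eq_mul,
    mul_one_div]

lemma min_floor_le {n : ℕ} (hn : 0 < n) {t : ℝ} (ht : 0 ≤ t) :
    ((min n ⌊(n:ℝ) * t⌋₊ : ℕ) : ℝ) / n ≤ t := by
  have hn' : (0:ℝ) < n := by exact_mod_cast hn
  rw [div_le_iff₀ hn']
  have h1 : ((min n ⌊(n:ℝ)*t⌋₊ : ℕ):ℝ) ≤ (⌊(n:ℝ)*t⌋₊ : ℝ) := by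
    exact_mod_cast min_le_right n _
  have h2 := Nat.floor_le (show (0:ℝ) ≤ (n:ℝ)*t by positivity)
  nlinarith

lemma le_min_floor {n : ℕ} (hn : 0 < n) {t : ℝ} (ht0 : 0 ≤ t) (ht1 : t ≤ 1) :
    t ≤ ((min n ⌊(n:ℝ) * t⌋₊ : ℕ) : ℝ) / n + 1/n := by
  have hn' : (0:ℝ) < n := by exact_mod_cast hn
  rcases le_or_gt n ⌊(n:ℝ)*t⌋₊ with h | h
  · rw [min_eq_left h, div_self (ne_of_gt hn')]
    have : 0 ≤ 1/(n:ℝ) := by positivity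
    linarith
  · rw [min_eq_right (le_of_lt h)]
    have h2 := Nat.lt_floor_add_one ((n:ℝ)*t)
    rw [← add_div, le_div_iff₀ hn']
    nlinarith

/-! ### The integral -/

noncomputable def Sn (M : InvariantMean G Y) (f : Y → ℝ) (n : ℕ) : ℝ :=
  ∑ i ∈ Finset.range n, (1/(n:ℝ)) * M.m {y | ((i:ℝ)+1)/(n:ℝ) ≤ f y}

lemma Sn_mem (M : InvariantMean G Y) (f : Y → ℝ) (n : ℕ) :
    Sn M f n ∈ Set.Icc (0:ℝ) 1 := by
  constructor
  · exact Finset.sum_nonneg fun i _ => mul_nonneg (by positivity) (M.nonneg _)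
  · rcases Nat.eq_zero_or_pos n with h | h
    · simp [Sn, h]
    · have hn' : (0:ℝ) < n := by exact_mod_cast h
      calc Sn M f n ≤ ∑ _i ∈ Finset.range n, (1/(n:ℝ)) * 1 :=
            Finset.sum_le_sum fun i _ =>
              mul_le_mul_of_nonneg_left (m_le_one M _) (by positivity)
        _ = 1 := by
            rw [Finset.sum_const, Finset.card_range, nsmul_eq_mul, mul_one,
              mul_one_div, div_self (ne_of_gt hn')]

noncomputable def integ (M : InvariantMean G Y) (f : Y → ℝ) : ℝ := ulim (Sn M f)

lemma integ_spec (M : InvariantMean G Y) (f : Y → ℝ) :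
    Filter.Tendsto (Sn M f) UU (nhds (integ M f)) := ulim_spec (Sn_mem M f)

lemma integ_mem (M : InvariantMean G Y) (f : Y → ℝ) :
    integ M f ∈ Set.Icc (0:ℝ) 1 := ulim_mem (Sn_mem M f)

lemma integ_indicator (M : InvariantMean G Y) (A : Set Y) :
    integ M (fun y => if y ∈ A then (1:ℝ) else 0) = M.m A := by
  refine tendsto_nhds_unique (integ_spec M _) (Filter.Tendsto.congr' ?_ tendsto_const_nhds)
  filter_upwards [ev_pos] with n hn
  have hn' : (0:ℝ) < n := by exact_mod_cast hn
  have hset : ∀ i ∈ Finset.range n,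
      {y : Y | ((i:ℝ)+1)/(n:ℝ) ≤ (if y ∈ A then (1:ℝ) else 0)} = A := by
    intro i hi
    rw [Finset.mem_range] at hi
    ext y
    simp only [Set.mem_setOf_eq]
    by_cases hy : y ∈ A
    · rw [if_pos hy]
      simp only [hy, iff_true]
      rw [div_le_one hn']
      have h6 : i + 1 ≤ n := hi
      exact_mod_cast h6
    · rw [if_neg hy]
      simp only [hy, iff_false]
      intro hc
      have hpos : 0 < ((i:ℝ)+1)/(n:ℝ) := by positivity
      linarith
  show M.m A = Sn M _ n
  rw [Sn, Finset.sum_congr rfl (fun i hi => by rw [hset i hi])]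
  rw [Finset.sum_const, Finset.card_range, nsmul_eq_mul, ← mul_assoc, mul_one_div,
    div_self (ne_of_gt hn'), one_mul]

end IMaux
namespace IMaux

attribute [local instance] Classical.propDecidable

variable {G : Type*} [Group G] {Y : Type*} [MulAction G Y]

lemma integ_le (M : InvariantMean G Y) {f : Y → ℝ} {A : Set Y} {c : ℝ}
    (hf0 : ∀ y, 0 ≤ f y) (hfc : ∀ y, f y ≤ if y ∈ A then c else 0) :
    integ M f ≤ c * M.m A := by
  apply ulim_le (Sn_mem M f)
  filter_upwards [ev_pos] with n hn
  have h := key2 M (ι := Fin n) (κ := Unit)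
    (fun i : Fin n => {y | (((i:ℕ):ℝ)+1)/(n:ℝ) ≤ f y}) (fun _ => 1/(n:ℝ))
    (fun _ => A) (fun _ => c) ?_
  · calc Sn M f n = ∑ i : Fin n, (1/(n:ℝ)) * M.m {y | (((i:ℕ):ℝ)+1)/(n:ℝ) ≤ f y} := by
          rw [Sn, ← Fin.sum_univ_eq_sum_range
            (fun j : ℕ => (1/(n:ℝ)) * M.m {y | ((j:ℝ)+1)/(n:ℝ) ≤ f y}) n]
      _ ≤ ∑ _j : Unit, c * M.m A := h
      _ = c * M.m A := by simp
  · intro y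
    have hL : (∑ i : Fin n, if y ∈ {z | (((i:ℕ):ℝ)+1)/(n:ℝ) ≤ f z} then 1/(n:ℝ) else 0)
        = ((min n ⌊(n:ℝ) * f y⌋₊ : ℕ) : ℝ) / n := by
      rw [← snsum_eq hn (hf0 y)]
      rw [← Fin.sum_univ_eq_sum_range
        (fun j : ℕ => if ((j:ℝ)+1)/(n:ℝ) ≤ f y then (1/(n:ℝ)) else 0) n]
      exact Finset.sum_congr rfl fun i _ => by simp [Set.mem_setOf_eq]
    rw [hL]
    have h1 := min_floor_le hn (hf0 y)
    have h2 := hfc y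
    calc ((min n ⌊(n:ℝ) * f y⌋₊ : ℕ) : ℝ) / n ≤ f y := h1
      _ ≤ if y ∈ A then c else 0 := h2
      _ = ∑ _j : Unit, if y ∈ A then c else 0 := by simp

end IMaux
namespace IMaux

attribute [local instance] Classical.propDecidable

variable {G : Type*} [Group G] {Y : Type*} [MulAction G Y]

lemma Sn_eq_fin (M : InvariantMean G Y) (f : Y → ℝ) (n : ℕ) :
    Sn M f n = ∑ i : Fin n, (1/(n:ℝ)) * M.m {y | (((i:ℕ):ℝ)+1)/(n:ℝ) ≤ f y} := by
  rw [Sn, ← Fin.sum_univ_eq_sum_range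
    (fun j : ℕ => (1/(n:ℝ)) * M.m {y | ((j:ℝ)+1)/(n:ℝ) ≤ f y}) n]

lemma stair_ite (f : Y → ℝ) {n : ℕ} (hn : 0 < n) (y : Y) (hf0 : 0 ≤ f y) :
    (∑ i : Fin n, if y ∈ {z | (((i:ℕ):ℝ)+1)/(n:ℝ) ≤ f z} then 1/(n:ℝ) else 0)
      = ((min n ⌊(n:ℝ) * f y⌋₊ : ℕ) : ℝ) / n := by
  rw [← snsum_eq hn hf0, ← Fin.sum_univ_eq_sum_range
    (fun j : ℕ => if ((j:ℝ)+1)/(n:ℝ) ≤ f y then (1/(n:ℝ)) else 0) n]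
  exact Finset.sum_congr rfl fun i _ => by simp [Set.mem_setOf_eq]

lemma Sn_add_le (M : InvariantMean G Y) {f g : Y → ℝ}
    (hf0 : ∀ y, 0 ≤ f y) (hg0 : ∀ y, 0 ≤ g y)
    (hf1 : ∀ y, f y ≤ 1) (hg1 : ∀ y, g y ≤ 1)
    {m n : ℕ} (hm : 0 < m) (hn : 0 < n) :
    Sn M (fun y => f y + g y) m ≤ Sn M f n + Sn M g n + 2/n := by
  have h := key2 M (ι := Fin m) (κ := (Fin n ⊕ Fin n) ⊕ Unit)
    (fun i : Fin m => {y | (((i:ℕ):ℝ)+1)/(m:ℝ) ≤ f y + g y}) (fun _ => 1/(m:ℝ))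
    (Sum.elim (Sum.elim (fun i : Fin n => {y | (((i:ℕ):ℝ)+1)/(n:ℝ) ≤ f y})
      (fun i : Fin n => {y | (((i:ℕ):ℝ)+1)/(n:ℝ) ≤ g y})) (fun _ => Set.univ))
    (Sum.elim (Sum.elim (fun _ => 1/(n:ℝ)) (fun _ => 1/(n:ℝ))) (fun _ => 2/(n:ℝ))) ?_
  · refine le_trans (le_of_eq (Sn_eq_fin M (fun y => f y + g y) m)) (le_trans h (le_of_eq ?_))
    simp only [Fintype.sum_sum_type, Sum.elim_inl, Sum.elim_inr]
    rw [← Sn_eq_fin M f n, ← Sn_eq_fin M g n]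
    have hu : ∑ _j : Unit, (2/(n:ℝ)) * M.m Set.univ = 2/(n:ℝ) := by
      simp [M.total]
    rw [hu]
  · intro y
    have hfg0 : 0 ≤ f y + g y := add_nonneg (hf0 y) (hg0 y)
    have hL := stair_ite (fun z => f z + g z) hm y hfg0
    simp only [Fintype.sum_sum_type, Sum.elim_inl, Sum.elim_inr]
    erw [hL, stair_ite f hn y (hf0 y), stair_ite g hn y (hg0 y)]
    have hu : (∑ _j : Unit, if y ∈ Set.univ then 2/(n:ℝ) else 0) = 2/(n:ℝ) := by simp
    change _ ≤ _ + ∑ _j : Unit, @ite ℝ (y ∈ (Set.univ : Set Y)) (Classical.propDecidable _) (2/(n:ℝ)) 0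
    rw [Fintype.sum_unique, if_pos (Set.mem_univ y)]
    have h1 := min_floor_le hm hfg0
    have h2 := le_min_floor hn (hf0 y) (hf1 y)
    have h3 := le_min_floor hn (hg0 y) (hg1 y)
    have h4 : 2/(n:ℝ) = 1/n + 1/n := by ring
    linarith

lemma Sn_le_add (M : InvariantMean G Y) {f g : Y → ℝ}
    (hf0 : ∀ y, 0 ≤ f y) (hg0 : ∀ y, 0 ≤ g y) (hfg1 : ∀ y, f y + g y ≤ 1)
    {m n : ℕ} (hm : 0 < m) (hn : 0 < n) :
    Sn M f n + Sn M g n ≤ Sn M (fun y => f y + g y) m + 1/m := by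
  have h := key2 M (ι := Fin n ⊕ Fin n) (κ := Fin m ⊕ Unit)
    (Sum.elim (fun i : Fin n => {y | (((i:ℕ):ℝ)+1)/(n:ℝ) ≤ f y})
      (fun i : Fin n => {y | (((i:ℕ):ℝ)+1)/(n:ℝ) ≤ g y}))
    (Sum.elim (fun _ => 1/(n:ℝ)) (fun _ => 1/(n:ℝ)))
    (Sum.elim (fun i : Fin m => {y | (((i:ℕ):ℝ)+1)/(m:ℝ) ≤ f y + g y}) (fun _ => Set.univ))
    (Sum.elim (fun _ => 1/(m:ℝ)) (fun _ => 1/(m:ℝ))) ?_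
  · refine le_trans (le_of_eq ?_) (le_trans h (le_of_eq ?_))
    · simp only [Fintype.sum_sum_type, Sum.elim_inl, Sum.elim_inr]
      rw [← Sn_eq_fin M f n, ← Sn_eq_fin M g n]
    · simp only [Fintype.sum_sum_type, Sum.elim_inl, Sum.elim_inr]
      rw [← Sn_eq_fin M (fun y => f y + g y) m]
      have hu : ∑ _j : Unit, (1/(m:ℝ)) * M.m Set.univ = 1/(m:ℝ) := by
        simp [M.total]
      rw [hu]
  · intro y
    have hfg0 : 0 ≤ f y + g y := add_nonneg (hf0 y) (hg0 y)
    simp only [Fintype.sum_sum_type, Sum.elim_inl, Sum.elim_inr]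
    erw [stair_ite (fun z => f z + g z) hm y hfg0,
      stair_ite f hn y (hf0 y), stair_ite g hn y (hg0 y)]
    have hu : (∑ _j : Unit, if y ∈ Set.univ then 1/(m:ℝ) else 0) = 1/(m:ℝ) := by simp
    change _ ≤ _ + ∑ _j : Unit, @ite ℝ (y ∈ (Set.univ : Set Y)) (Classical.propDecidable _) (1/(m:ℝ)) 0
    rw [Fintype.sum_unique, if_pos (Set.mem_univ y)]
    have h1 := min_floor_le hn (hf0 y)
    have h2 := min_floor_le hn (hg0 y)
    have h3 := le_min_floor hm hfg0 (hfg1 y)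
    linarith

lemma integ_add (M : InvariantMean G Y) {f g : Y → ℝ}
    (hf0 : ∀ y, 0 ≤ f y) (hg0 : ∀ y, 0 ≤ g y) (hfg1 : ∀ y, f y + g y ≤ 1) :
    integ M (fun y => f y + g y) = integ M f + integ M g := by
  have hf1 : ∀ y, f y ≤ 1 := fun y => by have := hg0 y; have := hfg1 y; linarith
  have hg1 : ∀ y, g y ≤ 1 := fun y => by have := hf0 y; have := hfg1 y; linarith
  have hub : integ M (fun y => f y + g y) ≤ integ M f + integ M g := by
    apply ulim_le (Sn_mem M _)
    filter_upwards [ev_pos] with m hm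
    have ht : Filter.Tendsto (fun n : ℕ => Sn M f n + Sn M g n + 2/(n:ℝ)) UU
        (nhds (integ M f + integ M g + 0)) :=
      ((integ_spec M f).add (integ_spec M g)).add (tendsto_div_nat 2)
    rw [add_zero] at ht
    refine ge_of_tendsto ht ?_
    filter_upwards [ev_pos] with n hn
    exact Sn_add_le M hf0 hg0 hf1 hg1 hm hn
  have hlb : integ M f + integ M g ≤ integ M (fun y => f y + g y) := by
    have ht2 : Filter.Tendsto (fun n : ℕ => Sn M f n + Sn M g n) UU
        (nhds (integ M f + integ M g)) := (integ_spec M f).add (integ_spec M g)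
    refine le_of_tendsto ht2 ?_
    filter_upwards [ev_pos] with n hn
    have ht3 : Filter.Tendsto (fun m : ℕ => Sn M (fun y => f y + g y) m + 1/(m:ℝ)) UU
        (nhds (integ M (fun y => f y + g y) + 0)) :=
      (integ_spec M _).add (tendsto_div_nat 1)
    rw [add_zero] at ht3
    refine ge_of_tendsto ht3 ?_
    filter_upwards [ev_pos] with m hm
    exact Sn_le_add M hf0 hg0 hfg1 hm hn
  linarith

lemma integ_comp_smul (M : InvariantMean G Y) (f : Y → ℝ) (g : G) :
    integ M (fun y => f (g • y)) = integ M f := by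
  unfold integ
  congr 1
  funext n
  unfold Sn
  refine Finset.sum_congr rfl fun i _ => ?_
  congr 1
  have hset : {y : Y | ((i:ℝ)+1)/(n:ℝ) ≤ f (g • y)}
      = (fun z => g⁻¹ • z) '' {y | ((i:ℝ)+1)/(n:ℝ) ≤ f y} := by
    ext y
    simp only [Set.mem_image, Set.mem_setOf_eq]
    constructor
    · intro hy
      exact ⟨g • y, hy, by simp⟩
    · rintro ⟨z, hz, rfl⟩
      simpa using hz
  rw [hset, M.invariant g⁻¹]

end IMaux
namespace IMaux

attribute [local instance] Classical.propDecidable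

variable {G : Type*} [Group G] {X : Type*} [DecidableEq X] [MulAction G X]

/-- Convolution of means on finite subsets via unions of independent samples. -/
noncomputable def conv (M N : InvariantMean G (Finset X)) : InvariantMean G (Finset X) where
  m A := integ M (fun E => N.m {F | E ∪ F ∈ A})
  nonneg A := (integ_mem M _).1
  total := by
    show integ M (fun E : Finset X => N.m {F | E ∪ F ∈ (Set.univ : Set (Finset X))}) = 1
    have heq : (fun E : Finset X => N.m {F | E ∪ F ∈ (Set.univ : Set (Finset X))})
        = fun E : Finset X => @ite ℝ (E ∈ (Set.univ : Set (Finset X)))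
            (Classical.propDecidable _) (1:ℝ) 0 := by
      funext E
      have h1 : {F : Finset X | E ∪ F ∈ (Set.univ : Set (Finset X))} = Set.univ := by
        ext F; simp
      rw [h1, N.total]
      simp
    rw [heq, integ_indicator, M.total]
  add_disjoint A B hAB := by
    show integ M (fun E : Finset X => N.m {F | E ∪ F ∈ A ∪ B})
      = integ M (fun E : Finset X => N.m {F | E ∪ F ∈ A})
        + integ M (fun E : Finset X => N.m {F | E ∪ F ∈ B})
    have hpt : ∀ E : Finset X, {F | E ∪ F ∈ A ∪ B} = {F | E ∪ F ∈ A} ∪ {F | E ∪ F ∈ B} := by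
      intro E; ext F; simp [Set.mem_union]
    have hdis : ∀ E : Finset X, Disjoint {F : Finset X | E ∪ F ∈ A} {F | E ∪ F ∈ B} := by
      intro E
      rw [Set.disjoint_left]
      intro F h1 h2
      exact Set.disjoint_left.mp hAB h1 h2
    have heq : (fun E : Finset X => N.m {F | E ∪ F ∈ A ∪ B})
        = fun E => N.m {F | E ∪ F ∈ A} + N.m {F | E ∪ F ∈ B} := by
      funext E
      rw [hpt E, N.add_disjoint _ _ (hdis E)]
    rw [heq]
    exact integ_add M (fun E => N.nonneg _) (fun E => N.nonneg _)
      (fun E => by rw [← N.add_disjoint _ _ (hdis E), ← hpt E]; exact m_le_one N _)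
  invariant g A := by
    show integ M (fun E : Finset X => N.m {F | E ∪ F ∈ (g • ·) '' A})
      = integ M (fun E : Finset X => N.m {F | E ∪ F ∈ A})
    have hstep : ∀ E : Finset X,
        N.m {F | E ∪ F ∈ (g • ·) '' A} = N.m {F | (g⁻¹ • E) ∪ F ∈ A} := by
      intro E
      have h1 : {F : Finset X | E ∪ F ∈ (g • ·) '' A}
          = (g • ·) '' {F | (g⁻¹ • E) ∪ F ∈ A} := by
        ext F
        simp only [Set.mem_image, Set.mem_setOf_eq]
        constructor
        · rintro ⟨D, hD, hDE⟩
          refine ⟨g⁻¹ • F, ?_, by simp⟩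
          have h2 : (g⁻¹ • E) ∪ (g⁻¹ • F) = D := by
            rw [← Finset.smul_finset_union, ← hDE, inv_smul_smul]
          rw [h2]; exact hD
        · rintro ⟨D, hD, rfl⟩
          exact ⟨(g⁻¹ • E) ∪ D, hD, by rw [Finset.smul_finset_union, smul_inv_smul]⟩
      rw [h1, N.invariant g]
    have heq : (fun E : Finset X => N.m {F | E ∪ F ∈ (g • ·) '' A})
        = fun E : Finset X => (fun E' : Finset X => N.m {F | E' ∪ F ∈ A}) (g⁻¹ • E) := by
      funext E; exact hstep E
    rw [heq, integ_comp_smul M (fun E' : Finset X => N.m {F | E' ∪ F ∈ A}) g⁻¹]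

lemma conv_compl (M N : InvariantMean G (Finset X)) (x₀ : X) :
    (conv M N).m {E : Finset X | x₀ ∉ E}
      ≤ N.m {E : Finset X | x₀ ∉ E} * M.m {E : Finset X | x₀ ∉ E} := by
  have hbd : ∀ E : Finset X, N.m {F | E ∪ F ∈ {E' : Finset X | x₀ ∉ E'}}
      ≤ @ite ℝ (E ∈ {E' : Finset X | x₀ ∉ E'}) (Classical.propDecidable _)
          (N.m {E' : Finset X | x₀ ∉ E'}) 0 := by
    intro E
    by_cases hE : x₀ ∈ E
    · have hset : {F : Finset X | E ∪ F ∈ {E' : Finset X | x₀ ∉ E'}} = ∅ := by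
        ext F; simp [Set.mem_setOf_eq, hE]
      have hE' : E ∉ {E' : Finset X | x₀ ∉ E'} := by simp [Set.mem_setOf_eq, hE]
      rw [hset, m_empty N, if_neg hE']
    · have hset : {F : Finset X | E ∪ F ∈ {E' : Finset X | x₀ ∉ E'}}
          = {E' : Finset X | x₀ ∉ E'} := by
        ext F; simp [Set.mem_setOf_eq, hE]
      have hE' : E ∈ {E' : Finset X | x₀ ∉ E'} := hE
      rw [hset, if_pos hE']
  exact integ_le M (fun E => N.nonneg _) hbd

noncomputable def iter (M : InvariantMean G (Finset X)) : ℕ → InvariantMean G (Finset X)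
  | 0 => M
  | (k+1) => conv M (iter M k)

lemma iter_compl (M : InvariantMean G (Finset X)) (x₀ : X)
    (hM : M.m {E : Finset X | x₀ ∈ E} = 1/2) (k : ℕ) :
    (iter M k).m {E : Finset X | x₀ ∉ E} ≤ (1/2 : ℝ)^(k+1) := by
  have hD : {E : Finset X | x₀ ∉ E} = {E : Finset X | x₀ ∈ E}ᶜ := by
    ext E; simp
  have hMD : M.m {E : Finset X | x₀ ∉ E} = 1/2 := by
    rw [hD, m_compl, hM]; norm_num
  induction k with
  | zero => rw [iter, hMD]; norm_num
  | succ k ih =>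
    calc (iter M (k+1)).m {E : Finset X | x₀ ∉ E}
        ≤ (iter M k).m {E : Finset X | x₀ ∉ E} * M.m {E : Finset X | x₀ ∉ E} :=
          conv_compl M (iter M k) x₀
      _ ≤ (1/2:ℝ)^(k+1) * (1/2) := by
          rw [hMD]
          exact mul_le_mul_of_nonneg_right ih (by norm_num)
      _ = (1/2:ℝ)^(k+2) := by ring

/-- The limit mean along the ultrafilter. -/
noncomputable def limitMean (M : InvariantMean G (Finset X)) : InvariantMean G (Finset X) where
  m A := ulim (fun k => (iter M k).m A)
  nonneg A := (ulim_mem (fun k => m_mem_Icc _ A)).1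
  total := by
    apply ulim_eq (fun k => m_mem_Icc _ _)
    have heq : (fun k => (iter M k).m Set.univ) = fun _ : ℕ => (1:ℝ) :=
      funext fun k => (iter M k).total
    rw [heq]
    exact tendsto_const_nhds
  add_disjoint A B hAB := by
    apply ulim_eq (fun k => m_mem_Icc _ _)
    have heq : (fun k => (iter M k).m (A ∪ B))
        = fun k => (iter M k).m A + (iter M k).m B :=
      funext fun k => (iter M k).add_disjoint A B hAB
    rw [heq]
    exact (ulim_spec (fun k => m_mem_Icc _ A)).add (ulim_spec (fun k => m_mem_Icc _ B))
  invariant g A := by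
    show ulim _ = ulim _
    congr 1
    funext k
    exact (iter M k).invariant g A

end IMaux

open IMaux in
theorem mean_full_weight_of_mean_half
    (G : Type*) [Group G] (X : Type*) [DecidableEq X] [MulAction G X]
    [MulAction.IsPretransitive G X] (x₀ : X)
    (h : ∃ M : InvariantMean G (Finset X), M.m {E : Finset X | x₀ ∈ E} = 1 / 2) :
    ∃ M : InvariantMean G (Finset X), M.m {E : Finset X | x₀ ∈ E} = 1 := by
  obtain ⟨M, hM⟩ := h
  refine ⟨limitMean M, ?_⟩
  have hD : {E : Finset X | x₀ ∈ E}ᶜ = {E : Finset X | x₀ ∉ E} := by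
    ext E; simp
  have hcompl : (limitMean M).m {E : Finset X | x₀ ∈ E}ᶜ = 0 := by
    show ulim (fun k => (iter M k).m {E : Finset X | x₀ ∈ E}ᶜ) = 0
    apply ulim_eq (fun k => m_mem_Icc _ _)
    have hle : ∀ k : ℕ, (iter M k).m {E : Finset X | x₀ ∈ E}ᶜ ≤ (1/2:ℝ)^(k+1) := by
      intro k
      rw [hD]
      exact iter_compl M x₀ hM k
    have hge : ∀ k : ℕ, (0:ℝ) ≤ (iter M k).m {E : Finset X | x₀ ∈ E}ᶜ :=
      fun k => (iter M k).nonneg _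
    have htend : Filter.Tendsto (fun k : ℕ => (1/2:ℝ)^(k+1)) UU (nhds 0) := by
      have h1 : Filter.Tendsto (fun k : ℕ => (1/2:ℝ)^k) Filter.atTop (nhds 0) :=
        tendsto_pow_atTop_nhds_zero_of_lt_one (by norm_num) (by norm_num)
      have h2 : Filter.Tendsto (fun k : ℕ => (1/2:ℝ)^(k+1)) Filter.atTop (nhds ((1/2)*0)) := by
        simpa [pow_succ, mul_comm] using h1.const_mul (1/2 : ℝ)
      rw [mul_zero] at h2
      exact h2.mono_left UU_le
    exact squeeze_zero hge hle htend
  have hadd := (limitMean M).add_disjoint {E : Finset X | x₀ ∈ E}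
    {E : Finset X | x₀ ∈ E}ᶜ disjoint_compl_right
  rw [Set.union_compl_self, (limitMean M).total, hcompl] at hadd
  linarith
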